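/- Let K be a field of characteristic 0, A = K[t], D = K⟨t, ∂⟩ the Weyl algebra, D^# = K⟨t, t∂⟩ ⊂ D. Consider A as a left D^#-module via the natural action. Then the de Rham-type complex of the induced module: the two-term complex [D --·θ--> D] (right multiplication by θ = t∂, placed in degrees −1 and 0) computes D ⊗^L_{D^#} A, and its zeroth cohomology D/Dθ is isomorphic as a left D-module to the 'logarithmic induced module' u_+(A), while H^{−1} = 0, i.e. right multiplication by t∂ on the Weyl algebra D is injective. -/

import Mathlib

open Polynomial

/-- **The induced module `u₊(O) = D ⊗_{D^#} K[t]` is `D/D·(t∂)`, concentrated in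
degree `0`.**
Let `K` be a field of characteristic `0`, `A = K[t]`, and let `D = K⟨t, ∂⟩` be the
Weyl algebra: a `K`-algebra with a map `jA : A → D`, an element `∂ = der` with
`[∂, jA a] = jA a'`, free as a left `A`-module with PBW basis `(∂^k)`, acting on `A`
through `act` (with `jA a` acting by multiplication and `der` by `d/dt`).  Let
`D^# = K⟨t, t∂⟩ ⊆ D` and `θ = t∂`.  Then the two-term complex `[D --·θ--> D]`
computes `D ⊗^L_{D^#} A`:
* `H^{-1} = 0`: right multiplication by `θ = t∂` on `D` is injective;
* `H^0 = D/D·θ` is the induced module `u₊(A) = D ⊗_{D^#} A`: for every left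
  `D`-module `N`, `D`-linear maps `D/D·θ → N` correspond bijectively to
  `D^#`-linear maps `A → N` (universal property of the scalar extension). -/
theorem induced_module_concentrated (K : Type*) [Field K] [CharZero K]
    (D : Type*) [Ring D] [Algebra K D]
    (jA : Polynomial K →ₐ[K] D) (der : D)
    (hrel : ∀ a : Polynomial K, der * jA a - jA a * der = jA (Polynomial.derivative a))
    [Module (Polynomial K) D] (hsmul : ∀ (a : Polynomial K) (x : D), a • x = jA a * x)
    (B : Module.Basis ℕ (Polynomial K) D) (hB : ∀ k : ℕ, B k = der ^ k)
    (act : D →ₐ[K] Module.End K (Polynomial K))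
    (hactA : ∀ a : Polynomial K, act (jA a) = LinearMap.mulLeft K a)
    (hactd : act der = (Polynomial.derivative : Module.End K (Polynomial K))) :
    (∀ P : D, P * (jA Polynomial.X * der) = 0 → P = 0) ∧
    (∀ (N : Type*) [AddCommGroup N] [Module D N],
      (∀ f : Polynomial K →+ N,
        (∀ Q ∈ Algebra.adjoin K ({jA Polynomial.X, jA Polynomial.X * der} : Set D),
          ∀ a : Polynomial K, f (act Q a) = Q • f a) →
        ∃! g : (D ⧸ Submodule.span D ({jA Polynomial.X * der} : Set D)) →ₗ[D] N,
          ∀ P : D, g (Submodule.Quotient.mk P) = P • f 1) ∧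
      (∀ g : (D ⧸ Submodule.span D ({jA Polynomial.X * der} : Set D)) →ₗ[D] N,
        ∃! f : Polynomial K →+ N,
          (∀ Q ∈ Algebra.adjoin K ({jA Polynomial.X, jA Polynomial.X * der} : Set D),
            ∀ a : Polynomial K, f (act Q a) = Q • f a) ∧
          ∀ P : D, g (Submodule.Quotient.mk P) = P • f 1)) := by
  classical
  set t : D := jA Polynomial.X with ht
  set θ : D := t * der with hθ
  have hdt : der * t = t * der + 1 := by
    have h := hrel Polynomial.X
    simp only [Polynomial.derivative_X, map_one] at h
    rw [sub_eq_iff_eq_add] at h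
    rw [h, add_comm]
  -- nat cast smul vs polynomial smul
  have hnat : ∀ (k : ℕ) (x : D), ((k : Polynomial K)) • x = (k : ℕ) • x := by
    intro k x
    rw [hsmul, map_natCast, nsmul_eq_mul]
  -- commutation of powers of der with t
  have comm : ∀ k : ℕ, der ^ (k + 1) * t = t * der ^ (k + 1) + (k + 1 : ℕ) • der ^ k := by
    intro k
    induction k with
    | zero => simpa using hdt
    | succ k ih =>
      have : der ^ (k + 2) * t = der * (der ^ (k + 1) * t) := by
        rw [pow_succ']; rw [mul_assoc]
      rw [this, ih, mul_add, ← mul_assoc, hdt, mul_smul_comm, add_mul, one_mul,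
        ← pow_succ']
      rw [mul_assoc, ← pow_succ']
      have h2 : (k + 1 + 1) • der ^ (k + 1)
          = (k + 1) • der ^ (k + 1) + der ^ (k + 1) := succ_nsmul _ _
      rw [h2]
      abel
  -- B k * θ in terms of the basis
  have Bθ : ∀ k : ℕ, B k * θ
      = (Polynomial.X : Polynomial K) • B (k + 1) + ((k : Polynomial K)) • B k := by
    intro k
    simp only [hB]
    rw [hθ, ← mul_assoc]
    cases k with
    | zero =>
      simp [hsmul, ht]
    | succ k =>
      rw [comm k, add_mul, hsmul, ht, mul_assoc, ← pow_succ, smul_mul_assoc, ← pow_succ,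
        hnat]
  -- repr of B k * θ
  have reprBθ : ∀ k : ℕ, B.repr (B k * θ)
      = Finsupp.single (k + 1) (Polynomial.X : Polynomial K)
        + Finsupp.single k ((k : Polynomial K)) := by
    intro k
    rw [Bθ, map_add, map_smul, map_smul, B.repr_self, B.repr_self,
      Finsupp.smul_single, Finsupp.smul_single, smul_eq_mul, smul_eq_mul, mul_one, mul_one]
  -- scalar mult compatibility
  have hsm : ∀ (a : Polynomial K) (x y : D), (a • x) * y = a • (x * y) := by
    intro a x y
    rw [hsmul, hsmul, mul_assoc]
  -- Part 1 : injectivity of right multiplication by θ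
  have part1 : ∀ P : D, P * θ = 0 → P = 0 := by
    intro P hP
    by_contra hne
    have hc : B.repr P ≠ 0 := fun h => hne (by simpa using congrArg B.repr.symm h)
    have hsupp : (B.repr P).support.Nonempty := Finsupp.support_nonempty_iff.mpr hc
    set c := B.repr P with hcdef
    set n := c.support.max' hsupp with hn
    have hPsum : P = ∑ k ∈ c.support, c k • B k := by
      conv_lhs => rw [← B.linearCombination_repr P]
      rw [Finsupp.linearCombination_apply, Finsupp.sum]
    have hmul : P * θ = ∑ k ∈ c.support, c k • (B k * θ) := by
      rw [hPsum, Finset.sum_mul]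
      exact Finset.sum_congr rfl fun k _ => hsm _ _ _
    have hrepr : (0 : ℕ →₀ Polynomial K)
        = ∑ k ∈ c.support, c k •
            (Finsupp.single (k + 1) (Polynomial.X : Polynomial K)
              + Finsupp.single k ((k : Polynomial K))) := by
      have : B.repr (P * θ) = B.repr 0 := congrArg _ hP
      rw [map_zero] at this
      rw [← this, hmul, map_sum]
      exact Finset.sum_congr rfl fun k _ => by rw [map_smul, reprBθ]
    have heval := congrArg (fun f : ℕ →₀ Polynomial K => f (n + 1)) hrepr
    simp only [Finsupp.coe_zero, Pi.zero_apply, Finsupp.finset_sum_apply,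
      Finsupp.coe_add, Pi.add_apply, Finsupp.coe_smul, Pi.smul_apply,
      Finsupp.single_apply, smul_eq_mul] at heval
    have hne1 : ∀ k ∈ c.support, k ≠ n + 1 := by
      intro k hk
      have := Finset.le_max' c.support k hk
      omega
    have heval2 : (0 : Polynomial K) = c n * Polynomial.X := by
      rw [heval]
      rw [Finset.sum_eq_single n]
      · simp [hne1 n (c.support.max'_mem hsupp)]
      · intro k hk hkn
        have h1 : ¬ (k + 1 = n + 1) := by omega
        have h2 : k ≠ n + 1 := hne1 k hk
        simp [h1, hkn, if_neg (by omega : ¬ k = n + 1)]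
      · intro h
        exact absurd (c.support.max'_mem hsupp) h
    have hcn : c n ≠ 0 := Finsupp.mem_support_iff.mp (c.support.max'_mem hsupp)
    exact absurd heval2.symm (mul_ne_zero hcn Polynomial.X_ne_zero)
  -- membership of jA a in the subalgebra D^#
  have hjAmem : ∀ a : Polynomial K, jA a ∈ Algebra.adjoin K ({t, θ} : Set D) := by
    intro a
    have ha : a ∈ Algebra.adjoin K ({Polynomial.X} : Set (Polynomial K)) := by
      rw [Polynomial.adjoin_X]; trivial
    induction ha using Algebra.adjoin_induction with
    | mem x hx =>
      rcases hx with rfl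
      exact Algebra.subset_adjoin (Set.mem_insert _ _)
    | algebraMap r =>
      rw [AlgHom.commutes]
      exact Subalgebra.algebraMap_mem _ r
    | add x y hx hy ihx ihy => rw [map_add]; exact add_mem ihx ihy
    | mul x y hx hy ihx ihy => rw [map_mul]; exact mul_mem ihx ihy
  set I : Submodule D D := Submodule.span D ({θ} : Set D) with hI
  have hθI : θ ∈ I := Submodule.mem_span_singleton_self θ
  -- action of act on A
  have hactt : ∀ a : Polynomial K, act t a = Polynomial.X * a := by
    intro a
    rw [ht, hactA]
    rfl
  have hactθ : ∀ a : Polynomial K, act θ a = Polynomial.X * Polynomial.derivative a := by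
    intro a
    rw [hθ, map_mul, Module.End.mul_apply, hactd, hactA]
    rfl
  -- the key congruence
  have key : ∀ Q ∈ Algebra.adjoin K ({t, θ} : Set D), ∀ a : Polynomial K,
      jA (act Q a) - Q * jA a ∈ I := by
    intro Q hQ
    induction hQ using Algebra.adjoin_induction with
    | mem x hx =>
      intro a
      rcases hx with rfl | hx
      · rw [hactt, map_mul, ht, sub_self]
        exact zero_mem I
      · rcases hx with rfl
        rw [hactθ]
        have hder : der * jA a = jA a * der + jA (Polynomial.derivative a) := by
          have h := hrel a
          rw [sub_eq_iff_eq_add] at h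
          rw [h, add_comm]
        have hcomm : t * jA a = jA a * t := by
          rw [ht, ← map_mul, ← map_mul, mul_comm]
        have : jA (Polynomial.X * Polynomial.derivative a) - θ * jA a
            = (-(jA a)) • θ := by
          rw [hθ, mul_assoc, hder, mul_add, map_mul, ← ht, ← mul_assoc, hcomm,
            smul_eq_mul, neg_mul, ← mul_assoc]
          abel
        rw [this]
        exact Submodule.smul_mem I _ hθI
    | algebraMap r =>
      intro a
      have h1 : act ((algebraMap K D) r) a = r • a := by
        rw [AlgHom.commutes]
        rfl
      have h2 : jA (act ((algebraMap K D) r) a) = (algebraMap K D) r * jA a := by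
        rw [h1, map_smul, Algebra.smul_def]
      rw [h2, sub_self]
      exact zero_mem I
    | add x y hx hy ihx ihy =>
      intro a
      have : jA (act (x + y) a) - (x + y) * jA a
          = (jA (act x a) - x * jA a) + (jA (act y a) - y * jA a) := by
        rw [map_add, LinearMap.add_apply, map_add, add_mul]
        abel
      rw [this]
      exact add_mem (ihx a) (ihy a)
    | mul x y hx hy ihx ihy =>
      intro a
      have : jA (act (x * y) a) - (x * y) * jA a
          = (jA (act x (act y a)) - x * jA (act y a))
            + x • (jA (act y a) - y * jA a) := by
        rw [map_mul, Module.End.mul_apply, smul_sub, smul_eq_mul, smul_eq_mul,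
          mul_assoc]
        abel
      rw [this]
      exact add_mem (ihx (act y a)) (Submodule.smul_mem I x (ihy a))
  have keymk : ∀ Q ∈ Algebra.adjoin K ({t, θ} : Set D), ∀ a : Polynomial K,
      (Submodule.Quotient.mk (jA (act Q a)) : D ⧸ I)
        = Submodule.Quotient.mk (Q * jA a) := by
    intro Q hQ a
    exact (Submodule.Quotient.eq I).mpr (key Q hQ a)
  refine ⟨part1, ?_⟩
  intro N _ _
  constructor
  · -- universal property : lifting
    intro f hf
    have hθf : θ • f 1 = 0 := by
      have h := hf θ (Algebra.subset_adjoin (Set.mem_insert_of_mem _ rfl)) 1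
      rw [hactθ] at h
      simp only [Polynomial.derivative_one, mul_zero, map_zero] at h
      exact h.symm
    have hker : I ≤ LinearMap.ker (LinearMap.toSpanSingleton D N (f 1)) := by
      rw [hI, Submodule.span_le, Set.singleton_subset_iff]
      simpa [LinearMap.toSpanSingleton] using hθf
    refine ⟨I.liftQ (LinearMap.toSpanSingleton D N (f 1)) hker, fun P => rfl, ?_⟩
    intro g hg
    refine LinearMap.ext fun x => ?_
    obtain ⟨P⟩ := x
    exact hg P
  · -- converse : every map comes from a unique f
    intro g
    refine ⟨{ toFun := fun a => g (Submodule.Quotient.mk (jA a)),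
              map_zero' := by simp,
              map_add' := fun a b => by
                show g (Submodule.Quotient.mk (jA (a + b)))
                    = g (Submodule.Quotient.mk (jA a)) + g (Submodule.Quotient.mk (jA b))
                rw [map_add, Submodule.Quotient.mk_add, map_add] },
            ⟨?_, ?_⟩, ?_⟩
    · intro Q hQ a
      show g (Submodule.Quotient.mk (jA (act Q a))) = Q • g (Submodule.Quotient.mk (jA a))
      rw [keymk Q hQ a, ← smul_eq_mul, Submodule.Quotient.mk_smul, map_smul]
    · intro P
      show g (Submodule.Quotient.mk P) = P • g (Submodule.Quotient.mk (jA 1))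
      rw [map_one, ← map_smul, ← Submodule.Quotient.mk_smul, smul_eq_mul, mul_one]
    · intro f ⟨hf1, hf2⟩
      refine DFunLike.ext _ _ fun a => ?_
      show f a = g (Submodule.Quotient.mk (jA a))
      have h1 : f a = jA a • f 1 := by
        have := hf1 (jA a) (hjAmem a) 1
        rw [hactA] at this
        simpa using this
      have h2 : f 1 = g (Submodule.Quotient.mk 1) := by
        have := hf2 1
        rw [one_smul] at this
        exact this.symm
      rw [h1, h2, ← map_smul, ← Submodule.Quotient.mk_smul, smul_eq_mul, mul_one]
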